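/- Let V be a finite set, G a simple graph on V, and d ∈ ℕ. With Π_d and U^d_C as in the combinatorial lower bound construction, suppose there exists a vertex v ∈ V with |N_v \ U^d_{[v]_{Π_d}}| + |[v]_{Π_d} \ N_v| > d. Then there is no partition Π of V with maximum disagreement φ(Π) ≤ d. -/
import Mathlib


open scoped symmDiff

open Finset

variable {V : Type*} [Fintype V] [DecidableEq V]

/-- Closed neighborhood of `v`: `v` together with its adjacent vertices. -/
def nbhd (G : SimpleGraph V) [DecidableRel G.Adj] (v : V) : Finset V :=
  insert v (G.neighborFinset v)

/-- `P` encodes a partition of `V`, where `P v` is the block containing `v`. -/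
def IsPartitionFun (P : V → Finset V) : Prop :=
  (∀ v, v ∈ P v) ∧ ∀ u v : V, u ∈ P v → P u = P v

/-- Maximum disagreement of the partition `P`. -/
def phi (G : SimpleGraph V) [DecidableRel G.Adj] (P : V → Finset V) : ℕ :=
  Finset.univ.sup fun v => ((P v) ∆ (nbhd G v)).card

/-- Auxiliary graph `G_d`: edges are pairs whose closed neighborhoods intersect
in more than `2 * d` vertices. -/
def Gd (G : SimpleGraph V) [DecidableRel G.Adj] (d : ℕ) : SimpleGraph V :=
  SimpleGraph.fromRel fun u v => 2 * d < (nbhd G u ∩ nbhd G v).card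

/-- The block of `v` in the partition of `V` into connected components of `G_d`. -/
def compBlock (G : SimpleGraph V) [DecidableRel G.Adj] (d : ℕ)
    [DecidableRel (Gd G d).Reachable] (v : V) : Finset V :=
  Finset.univ.filter fun u => (Gd G d).Reachable u v

/-- The set `U^d_C` for the component `C` of `v`. -/
def Ud (G : SimpleGraph V) [DecidableRel G.Adj] (d : ℕ)
    [DecidableRel (Gd G d).Reachable] (v : V) : Finset V :=
  Finset.univ.filter fun x =>
    ∀ w ∈ compBlock G d x, ∀ u ∈ compBlock G d v, ((nbhd G w) ∆ (nbhd G u)).card ≤ 2 * d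

theorem statement11 (G : SimpleGraph V) [DecidableRel G.Adj] (d : ℕ)
    [DecidableRel (Gd G d).Reachable]
    (h : ∃ v : V, d < (nbhd G v \ Ud G d v).card + (compBlock G d v \ nbhd G v).card) :
    ¬ ∃ P : V → Finset V, IsPartitionFun P ∧ phi G P ≤ d := by
  rintro ⟨P, ⟨hmem, hblk⟩, hphi⟩
  obtain ⟨v, hv⟩ := h
  -- per-vertex bound
  have hper : ∀ w : V, ((P w) ∆ (nbhd G w)).card ≤ d := fun w =>
    le_trans (Finset.le_sup (f := fun v => ((P v) ∆ (nbhd G v)).card) (mem_univ w)) hphi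
  have hsd : ∀ w : V, (nbhd G w \ P w).card ≤ d := fun w => by
    refine le_trans (Finset.card_le_card ?_) (hper w)
    intro x hx
    rw [Finset.mem_symmDiff]
    right
    exact Finset.mem_sdiff.mp hx
  -- adjacency in Gd implies same block
  have hadj : ∀ u w : V, (Gd G d).Adj u w → P u = P w := by
    intro u w huw
    by_contra hne
    have hdisj : ∀ x : V, x ∈ P u → x ∉ P w := by
      intro x hxu hxw
      exact hne ((hblk x u hxu).symm.trans (hblk x w hxw))
    have hsub : nbhd G u ∩ nbhd G w ⊆ (nbhd G u \ P u) ∪ (nbhd G w \ P w) := by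
      intro x hx
      rw [Finset.mem_inter] at hx
      rw [Finset.mem_union, Finset.mem_sdiff, Finset.mem_sdiff]
      by_cases hxu : x ∈ P u
      · exact Or.inr ⟨hx.2, hdisj x hxu⟩
      · exact Or.inl ⟨hx.1, hxu⟩
    have hcard : (nbhd G u ∩ nbhd G w).card ≤ 2 * d := by
      calc (nbhd G u ∩ nbhd G w).card
          ≤ ((nbhd G u \ P u) ∪ (nbhd G w \ P w)).card := Finset.card_le_card hsub
        _ ≤ (nbhd G u \ P u).card + (nbhd G w \ P w).card := Finset.card_union_le _ _
        _ ≤ d + d := Nat.add_le_add (hsd u) (hsd w)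
        _ = 2 * d := (two_mul d).symm
    obtain ⟨hne', hor⟩ := huw
    rcases hor with h' | h'
    · exact absurd hcard (not_le.mpr h')
    · rw [Finset.inter_comm] at hcard
      exact absurd hcard (not_le.mpr h')
  -- reachable implies same block
  have hreach : ∀ u w : V, (Gd G d).Reachable u w → P u = P w := by
    intro u w hr
    obtain ⟨p⟩ := hr
    induction p with
    | nil => rfl
    | cons h' _ ih => exact (hadj _ _ h').trans ih
  -- compBlock v ⊆ P v
  have hcb : compBlock G d v ⊆ P v := by
    intro u hu
    rw [compBlock, Finset.mem_filter] at hu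
    rw [← hreach u v hu.2]
    exact hmem u
  -- P v ⊆ Ud G d v
  have hPU : P v ⊆ Ud G d v := by
    intro x hx
    rw [Ud, Finset.mem_filter]
    refine ⟨mem_univ x, fun w hw u hu => ?_⟩
    rw [compBlock, Finset.mem_filter] at hw hu
    have hPw : P w = P v := (hreach w x hw.2).trans (hblk x v hx)
    have hPu : P u = P v := hreach u v hu.2
    calc ((nbhd G w) ∆ (nbhd G u)).card
        ≤ ((nbhd G w) ∆ (P v) ∪ (P v) ∆ (nbhd G u)).card :=
          Finset.card_le_card (symmDiff_triangle _ _ _)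
      _ ≤ ((nbhd G w) ∆ (P v)).card + ((P v) ∆ (nbhd G u)).card := Finset.card_union_le _ _
      _ ≤ d + d := by
          refine Nat.add_le_add ?_ ?_
          · rw [symmDiff_comm, ← hPw]; exact hper w
          · rw [← hPu]; exact hper u
      _ = 2 * d := (two_mul d).symm
  -- conclude
  have h1 : nbhd G v \ Ud G d v ⊆ nbhd G v \ P v :=
    Finset.sdiff_subset_sdiff le_rfl hPU
  have h2 : compBlock G d v \ nbhd G v ⊆ P v \ nbhd G v :=
    Finset.sdiff_subset_sdiff hcb le_rfl
  have hdisj2 : Disjoint (nbhd G v \ P v) (P v \ nbhd G v) :=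
    disjoint_sdiff_sdiff
  have : (nbhd G v \ Ud G d v).card + (compBlock G d v \ nbhd G v).card ≤ d := by
    calc (nbhd G v \ Ud G d v).card + (compBlock G d v \ nbhd G v).card
        ≤ (nbhd G v \ P v).card + (P v \ nbhd G v).card :=
          Nat.add_le_add (Finset.card_le_card h1) (Finset.card_le_card h2)
      _ = ((nbhd G v \ P v) ∪ (P v \ nbhd G v)).card := (Finset.card_union_of_disjoint hdisj2).symm
      _ = ((P v) ∆ (nbhd G v)).card := by rw [Finset.union_comm, symmDiff_def, Finset.sup_eq_union]
      _ ≤ d := hper v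
  exact absurd this (not_le.mpr hv)
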